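/- arXiv:math/0304252 — 2 statements merged into one kernel-verified Lean document; each statement's English description precedes it below -/
import Mathlib

section
/- Let E be a finite set, d ≥ 1, and let φ be a generic antisymmetric function on the injective (d+1)-tuples of E. Then the Orchard relation ∼_φ has at most two equivalence classes: for any a, b, c ∈ E, if a ≁_φ b and b ≁_φ c then a ∼_φ c. -/
open Finset

/-- A function on `d`-tuples is symmetric if it is invariant under all
permutations of the index set. -/
def IsSymmetricFn {E : Type*} {d : ℕ} (φ : (Fin d → E) → ℝ) : Prop :=
  ∀ (x : Fin d → E) (σ : Equiv.Perm (Fin d)), φ (x ∘ σ) = φ x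

/-- A function on `d`-tuples is antisymmetric if permuting the entries by `σ`
multiplies the value by `sign σ`. -/
def IsAntisymmetricFn {E : Type*} {d : ℕ} (φ : (Fin d → E) → ℝ) : Prop :=
  ∀ (x : Fin d → E) (σ : Equiv.Perm (Fin d)),
    φ (x ∘ σ) = ((Equiv.Perm.sign σ : ℤ) : ℝ) * φ x

/-- A function on `d`-tuples is generic if it does not vanish on any injective tuple. -/
def IsGenericFn {E : Type*} {d : ℕ} (φ : (Fin d → E) → ℝ) : Prop :=
  ∀ x : Fin d → E, Function.Injective x → φ x ≠ 0

/-- A `d`-element subset `s` (not containing `a`, `b`) separates `a` from `b`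
with respect to `φ` if `φ(x₁,…,x_d,a) * φ(x₁,…,x_d,b) < 0` for some (equivalently,
for symmetric or antisymmetric `φ`, any) enumeration `x` of `s`. -/
def Separates {E : Type*} [DecidableEq E] {d : ℕ} (φ : (Fin (d + 1) → E) → ℝ)
    (s : Finset E) (a b : E) : Prop :=
  ∃ x : Fin d → E, Function.Injective x ∧ Finset.image x Finset.univ = s ∧
    φ (Fin.snoc x a) * φ (Fin.snoc x b) < 0

/-- `sepCount φ a b` is the number `n_φ(a,b)` of `d`-subsets of `E \ {a,b}`
separating `a` from `b`. -/
noncomputable def sepCount {E : Type*} [DecidableEq E] {d : ℕ}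
    (φ : (Fin (d + 1) → E) → ℝ) (a b : E) : ℕ :=
  Set.ncard {s : Finset E | s.card = d ∧ a ∉ s ∧ b ∉ s ∧ Separates φ s a b}

/-- The Orchard relation of a generic symmetric function. -/
def OrchardSym {E : Type*} [DecidableEq E] {d : ℕ}
    (φ : (Fin (d + 1) → E) → ℝ) (x y : E) : Prop :=
  x = y ∨ sepCount φ x y % 2 = 0

/-- The Orchard relation of a generic antisymmetric function. -/
def OrchardAnti {E : Type*} [Fintype E] [DecidableEq E] {d : ℕ}
    (φ : (Fin (d + 1) → E) → ℝ) (x y : E) : Prop :=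
  x = y ∨ sepCount φ x y % 2 = Nat.choose (Fintype.card E - 3) (d - 1) % 2

/-- Two generic functions are flip-related with flip set `F` if their product is
negative on tuples enumerating `F` and positive on all other injective tuples. -/
def FlipRelated {E : Type*} [DecidableEq E] {d : ℕ}
    (φ ψ : (Fin (d + 1) → E) → ℝ) (F : Finset E) : Prop :=
  ∀ x : Fin (d + 1) → E, Function.Injective x →
    (Finset.image x Finset.univ = F → φ x * ψ x < 0) ∧
    (Finset.image x Finset.univ ≠ F → 0 < φ x * ψ x)

/-- `Rmap φ (x₁,…,x_d) = ∏_{x ∈ E∖{x₁,…,x_d}} φ(x,x₁,…,x_d)`. -/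
noncomputable def Rmap {E : Type*} [Fintype E] [DecidableEq E] {d : ℕ}
    (φ : (Fin (d + 1) → E) → ℝ) : (Fin d → E) → ℝ :=
  fun x => ∏ y ∈ Finset.univ \ Finset.image x Finset.univ, φ (Fin.cons y x)

/-- `Amap φ (x₀,…,x_{d+1}) = ∏_{i=0}^{d+1} φ(x₀,…,x_{i-1},x_{i+1},…,x_{d+1})`. -/
noncomputable def Amap {E : Type*} {d : ℕ}
    (φ : (Fin (d + 1) → E) → ℝ) : (Fin (d + 2) → E) → ℝ :=
  fun x => ∏ i : Fin (d + 2), φ (x ∘ Fin.succAbove i)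

/-- `muCount φ x` is the number of `d`-subsets `{x₁,…,x_d} ⊆ E∖{x}` with
`φ(x,x₁,…,x_d) > 0`. -/
noncomputable def muCount {E : Type*} [DecidableEq E] {d : ℕ}
    (φ : (Fin (d + 1) → E) → ℝ) (x : E) : ℕ :=
  Set.ncard {s : Finset E | s.card = d ∧ x ∉ s ∧
    ∃ t : Fin d → E, Function.Injective t ∧ Finset.image t Finset.univ = s ∧
      0 < φ (Fin.cons x t)}

section Aux
variable {E : Type*}

lemma image_snoc [DecidableEq E] {d : ℕ} (x : Fin d → E) (a : E) :
    Finset.image (Fin.snoc x a : Fin (d+1) → E) Finset.univ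
      = insert a (Finset.image x Finset.univ) := by
  ext z
  simp only [Finset.mem_image, Finset.mem_insert, Finset.mem_univ, true_and]
  constructor
  · rintro ⟨i, rfl⟩
    induction i using Fin.lastCases with
    | last => left; simp
    | cast j => right; exact ⟨j, by simp⟩
  · rintro (rfl | ⟨j, rfl⟩)
    · exact ⟨Fin.last d, by simp⟩
    · exact ⟨j.castSucc, by simp⟩

lemma injective_snoc {d : ℕ} {x : Fin d → E} {a : E} (hx : Function.Injective x)
    (ha : a ∉ Set.range x) : Function.Injective (Fin.snoc x a : Fin (d+1) → E) := by
  intro i j h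
  induction i using Fin.lastCases with
  | last =>
    induction j using Fin.lastCases with
    | last => rfl
    | cast j => simp only [Fin.snoc_last, Fin.snoc_castSucc] at h
                exact absurd ⟨j, h.symm⟩ ha
  | cast i =>
    induction j using Fin.lastCases with
    | last => simp only [Fin.snoc_last, Fin.snoc_castSucc] at h
              exact absurd ⟨i, h⟩ ha
    | cast j => simp only [Fin.snoc_castSucc] at h
                exact congrArg Fin.castSucc (hx h)

/-- extend a permutation of `Fin d` to `Fin (d+1)` fixing the last element -/
def permSnoc {d : ℕ} (σ : Equiv.Perm (Fin d)) : Equiv.Perm (Fin (d+1)) where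
  toFun := Fin.snoc (fun i => (σ i).castSucc) (Fin.last d)
  invFun := Fin.snoc (fun i => (σ.symm i).castSucc) (Fin.last d)
  left_inv := by
    intro i
    induction i using Fin.lastCases with
    | last => simp
    | cast j => simp
  right_inv := by
    intro i
    induction i using Fin.lastCases with
    | last => simp
    | cast j => simp

lemma snoc_comp_permSnoc {d : ℕ} (x : Fin d → E) (a : E) (σ : Equiv.Perm (Fin d)) :
    (Fin.snoc x a : Fin (d+1) → E) ∘ (permSnoc σ) = Fin.snoc (x ∘ σ) a := by
  funext i
  induction i using Fin.lastCases with
  | last => simp [permSnoc]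
  | cast j => simp [permSnoc]

lemma prod_comp_perm {d : ℕ} {φ : (Fin d → E) → ℝ} (hanti : IsAntisymmetricFn φ)
    (y z : Fin d → E) (τ : Equiv.Perm (Fin d)) :
    φ (y ∘ τ) * φ (z ∘ τ) = φ y * φ z := by
  rw [hanti y τ, hanti z τ]
  rcases Int.units_eq_one_or (Equiv.Perm.sign τ) with h | h <;> rw [h] <;> push_cast <;> ring

lemma exists_perm_comp {d : ℕ} {x x' : Fin d → E} (hx : Function.Injective x)
    (hx' : Function.Injective x') [DecidableEq E]
    (h : Finset.image x Finset.univ = Finset.image x' Finset.univ) :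
    ∃ σ : Equiv.Perm (Fin d), x' = x ∘ σ := by
  have hr : Set.range x' = Set.range x := by
    rw [← Set.image_univ, ← Set.image_univ, ← Finset.coe_univ, ← Finset.coe_image,
      ← Finset.coe_image, h]
  refine ⟨(Equiv.ofInjective x' hx').trans ((Equiv.setCongr hr).trans
    (Equiv.ofInjective x hx).symm), ?_⟩
  funext i
  simp only [Function.comp_apply, Equiv.trans_apply, Equiv.setCongr_apply]
  rw [Equiv.apply_ofInjective_symm hx]
  rfl

lemma separates_iff {d : ℕ} {φ : (Fin (d+1) → E) → ℝ} (hanti : IsAntisymmetricFn φ)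
    [DecidableEq E] {s : Finset E} {a b : E} {x : Fin d → E}
    (hx : Function.Injective x) (him : Finset.image x Finset.univ = s) :
    Separates φ s a b ↔ φ (Fin.snoc x a) * φ (Fin.snoc x b) < 0 := by
  constructor
  · rintro ⟨x', hx', him', hlt⟩
    obtain ⟨σ, rfl⟩ := exists_perm_comp hx hx' (him.trans him'.symm)
    rwa [← snoc_comp_permSnoc, ← snoc_comp_permSnoc, prod_comp_perm hanti] at hlt
  · intro h
    exact ⟨x, hx, him, h⟩

lemma exists_enum [DecidableEq E] {k : ℕ} {s : Finset E} (h : s.card = k) :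
    ∃ x : Fin k → E, Function.Injective x ∧ Finset.image x Finset.univ = s := by
  refine ⟨fun i => (s.equivFin.symm (Fin.cast h.symm i) : E), ?_, ?_⟩
  · intro i j hij
    have := s.equivFin.symm.injective (Subtype.coe_injective hij)
    simpa [Fin.ext_iff] using this
  · ext z
    simp only [Finset.mem_image, Finset.mem_univ, true_and]
    constructor
    · rintro ⟨i, rfl⟩; exact (s.equivFin.symm _).2
    · intro hz
      exact ⟨Fin.cast h (s.equivFin ⟨z, hz⟩), by simp⟩

lemma swap_last {e : ℕ} {φ : (Fin (e+2) → E) → ℝ} (hanti : IsAntisymmetricFn φ)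
    (y : Fin e → E) (p q : E) :
    φ (Fin.snoc (Fin.snoc y p) q) = - φ (Fin.snoc (Fin.snoc y q) p) := by
  have hne : (Fin.last (e+1)) ≠ (Fin.last e).castSucc := (Fin.castSucc_lt_last _).ne'
  have hcomp : (Fin.snoc (Fin.snoc y q) p : Fin (e+2) → E) ∘
      (Equiv.swap (Fin.last (e+1)) ((Fin.last e).castSucc))
      = Fin.snoc (Fin.snoc y p) q := by
    funext i
    induction i using Fin.lastCases with
    | last => simp [Equiv.swap_apply_left]
    | cast j =>
      induction j using Fin.lastCases with
      | last => simp [Equiv.swap_apply_right]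
      | cast k =>
        have h1 : (k.castSucc.castSucc : Fin (e+2)) ≠ Fin.last (e+1) :=
          (Fin.castSucc_lt_last _).ne
        have h2 : (k.castSucc.castSucc : Fin (e+2)) ≠ (Fin.last e).castSucc := by
          simp only [ne_eq, Fin.castSucc_inj]
          exact (Fin.castSucc_lt_last _).ne
        simp [Equiv.swap_apply_of_ne_of_ne h1 h2]
  rw [← hcomp, hanti, Equiv.Perm.sign_swap hne]
  push_cast
  ring

lemma even3 {u v w : ℝ} (h : 0 < u * v * w) :
    ((if u < 0 then 1 else 0) + (if v < 0 then 1 else 0) + (if w < 0 then 1 else 0)) % 2 = 0 := by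
  rcases lt_or_ge u 0 with hu|hu <;> rcases lt_or_ge v 0 with hv|hv <;> rcases lt_or_ge w 0 with hw|hw
  · exfalso; nlinarith [mul_pos_of_neg_of_neg hu hv]
  · simp [hu, hv, hw.not_gt]
  · simp [hu, hv.not_gt, hw]
  · exfalso; nlinarith [mul_nonneg hv hw]
  · simp [hu.not_gt, hv, hw]
  · exfalso; nlinarith [mul_nonneg hu hw]
  · exfalso; nlinarith [mul_nonneg hu hv]
  · simp [hu.not_gt, hv.not_gt, hw.not_gt]

lemma odd3 {u v w : ℝ} (h : u * v * w < 0) :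
    ((if u < 0 then 1 else 0) + (if v < 0 then 1 else 0) + (if w < 0 then 1 else 0)) % 2 = 1 := by
  rcases lt_or_ge u 0 with hu|hu <;> rcases lt_or_ge v 0 with hv|hv <;> rcases lt_or_ge w 0 with hw|hw
  · simp [hu, hv, hw]
  · exfalso; nlinarith [mul_pos_of_neg_of_neg hu hv]
  · exfalso; nlinarith [mul_pos_of_neg_of_neg hu hw]
  · simp [hu, hv.not_gt, hw.not_gt]
  · exfalso; nlinarith [mul_pos_of_neg_of_neg hv hw]
  · simp [hu.not_gt, hv, hw.not_gt]
  · simp [hu.not_gt, hv.not_gt, hw]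
  · exfalso; nlinarith [mul_nonneg (mul_nonneg hu hv) hw]

end Aux

lemma not_mem_range_of_image {E : Type*} [DecidableEq E] {k : ℕ} {x : Fin k → E}
    {s : Finset E} (him : Finset.image x Finset.univ = s) {z : E} (hz : z ∉ s) :
    z ∉ Set.range x := by
  rintro ⟨i, rfl⟩
  exact hz (him ▸ Finset.mem_image_of_mem x (Finset.mem_univ i))

lemma card_filter_split {α : Type*} [Fintype α] (P Q : α → Prop)
    [DecidablePred P] [DecidablePred Q] :
    (univ.filter P).card = (univ.filter fun x => P x ∧ ¬ Q x).card
      + (univ.filter fun x => P x ∧ Q x).card := by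
  classical
  have h := Finset.card_filter_add_card_filter_not
    (s := univ.filter P) (p := fun x => ¬ Q x)
  rw [Finset.filter_filter, Finset.filter_filter] at h
  rw [← h]
  congr 1
  exact congrArg Finset.card (Finset.filter_congr (fun s _ => by tauto))

lemma key_parity {E : Type*} [Fintype E] [DecidableEq E] (e : ℕ)
    (φ : (Fin (e + 1 + 1) → E) → ℝ) (hgen : IsGenericFn φ) (hanti : IsAntisymmetricFn φ)
    (a b c : E) (hab : a ≠ b) (hbc : b ≠ c) (hac : a ≠ c) :
    (sepCount φ a b + sepCount φ b c + sepCount φ a c) % 2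
      = Nat.choose (Fintype.card E - 3) e % 2 := by
  classical
  -- sepCount as a filter card
  have hsc : ∀ u v : E, sepCount φ u v
      = (univ.filter fun s : Finset E =>
          s.card = e + 1 ∧ u ∉ s ∧ v ∉ s ∧ Separates φ s u v).card := by
    intro u v
    have h0 : sepCount φ u v = Set.ncard
        {s : Finset E | s.card = e + 1 ∧ u ∉ s ∧ v ∉ s ∧ Separates φ s u v} := rfl
    rw [h0, show {s : Finset E | s.card = e + 1 ∧ u ∉ s ∧ v ∉ s ∧ Separates φ s u v}
        = ↑(univ.filter fun s : Finset E =>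
          s.card = e + 1 ∧ u ∉ s ∧ v ∉ s ∧ Separates φ s u v) from by ext s; simp,
      Set.ncard_coe_finset]
  have tab : sepCount φ a b
      = (univ.filter fun s : Finset E =>
          (s.card = e + 1 ∧ a ∉ s ∧ b ∉ s ∧ Separates φ s a b) ∧ c ∉ s).card
        + (univ.filter fun s : Finset E =>
          (s.card = e + 1 ∧ a ∉ s ∧ b ∉ s ∧ Separates φ s a b) ∧ c ∈ s).card := by
    rw [hsc a b]; exact card_filter_split _ _
  have tbc : sepCount φ b c
      = (univ.filter fun s : Finset E =>
          (s.card = e + 1 ∧ b ∉ s ∧ c ∉ s ∧ Separates φ s b c) ∧ a ∉ s).card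
        + (univ.filter fun s : Finset E =>
          (s.card = e + 1 ∧ b ∉ s ∧ c ∉ s ∧ Separates φ s b c) ∧ a ∈ s).card := by
    rw [hsc b c]; exact card_filter_split _ _
  have tac : sepCount φ a c
      = (univ.filter fun s : Finset E =>
          (s.card = e + 1 ∧ a ∉ s ∧ c ∉ s ∧ Separates φ s a c) ∧ b ∉ s).card
        + (univ.filter fun s : Finset E =>
          (s.card = e + 1 ∧ a ∉ s ∧ c ∉ s ∧ Separates φ s a c) ∧ b ∈ s).card := by
    rw [hsc a c]; exact card_filter_split _ _
  set T : Finset (Finset E) :=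
    univ.filter (fun s : Finset E => s.card = e + 1 ∧ a ∉ s ∧ b ∉ s ∧ c ∉ s) with hT
  set T2 : Finset (Finset E) :=
    univ.filter (fun t : Finset E => t.card = e ∧ a ∉ t ∧ b ∉ t ∧ c ∉ t) with hT2
  -- even part rewrites
  have hQ : ∀ (u v p : E),
      (∀ s : Finset E, ((s.card = e + 1 ∧ u ∉ s ∧ v ∉ s ∧ Separates φ s u v) ∧ p ∉ s)
        ↔ ((s.card = e + 1 ∧ a ∉ s ∧ b ∉ s ∧ c ∉ s) ∧ Separates φ s u v)) →
      (univ.filter fun s : Finset E =>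
          (s.card = e + 1 ∧ u ∉ s ∧ v ∉ s ∧ Separates φ s u v) ∧ p ∉ s).card
        = ∑ s ∈ T, if Separates φ s u v then 1 else 0 := by
    intro u v p hiff
    calc (univ.filter fun s : Finset E =>
          (s.card = e + 1 ∧ u ∉ s ∧ v ∉ s ∧ Separates φ s u v) ∧ p ∉ s).card
        = ((univ.filter fun s : Finset E => s.card = e + 1 ∧ a ∉ s ∧ b ∉ s ∧ c ∉ s).filter
            (fun s => Separates φ s u v)).card := by
          rw [Finset.filter_filter]
          exact congrArg Finset.card (Finset.filter_congr (fun s _ => hiff s))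
      _ = ∑ s ∈ T, if Separates φ s u v then 1 else 0 := by
          rw [hT]; exact Finset.card_filter _ _
  have hQab := hQ a b c (fun s => by tauto)
  have hQbc := hQ b c a (fun s => by tauto)
  have hQac := hQ a c b (fun s => by tauto)
  -- odd part rewrites
  have hR : ∀ (u v p : E), u ≠ p → v ≠ p →
      (∀ t : Finset E, ((t.card = e ∧ u ∉ t ∧ v ∉ t ∧ p ∉ t))
        ↔ ((t.card = e ∧ a ∉ t ∧ b ∉ t ∧ c ∉ t))) →
      (univ.filter fun s : Finset E =>
          (s.card = e + 1 ∧ u ∉ s ∧ v ∉ s ∧ Separates φ s u v) ∧ p ∈ s).card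
        = ∑ t ∈ T2, if Separates φ (insert p t) u v then 1 else 0 := by
    intro u v p hup hvp hiff
    calc (univ.filter fun s : Finset E =>
          (s.card = e + 1 ∧ u ∉ s ∧ v ∉ s ∧ Separates φ s u v) ∧ p ∈ s).card
        = ((univ.filter fun t : Finset E => t.card = e ∧ a ∉ t ∧ b ∉ t ∧ c ∉ t).filter
            (fun t => Separates φ (insert p t) u v)).card := by
          rw [Finset.filter_filter]
          apply Finset.card_nbij' (fun s => s.erase p) (fun t => insert p t)
          · intro s hs
            simp only [Finset.mem_coe, Finset.mem_filter, Finset.mem_univ, true_and] at hs ⊢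
            obtain ⟨⟨hcard, hu, hv, hsep⟩, hp⟩ := hs
            have h1 : (s.erase p).card = e := by
              rw [Finset.card_erase_of_mem hp, hcard]; rfl
            refine ⟨(hiff _).1 ⟨h1, fun h => hu (Finset.mem_of_mem_erase h),
              fun h => hv (Finset.mem_of_mem_erase h), Finset.notMem_erase p s⟩, ?_⟩
            rw [Finset.insert_erase hp]; exact hsep
          · intro t ht
            simp only [Finset.mem_coe, Finset.mem_filter, Finset.mem_univ, true_and] at ht ⊢
            obtain ⟨hbase, hsep⟩ := ht
            obtain ⟨hcard, hu, hv, hp⟩ := (hiff _).2 hbase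
            exact ⟨⟨by rw [Finset.card_insert_of_notMem hp, hcard],
              by simp [Finset.mem_insert, hup, hu],
              by simp [Finset.mem_insert, hvp, hv], hsep⟩, Finset.mem_insert_self p t⟩
          · intro s hs
            simp only [Finset.mem_coe, Finset.mem_filter, Finset.mem_univ, true_and] at hs
            exact Finset.insert_erase hs.2
          · intro t ht
            simp only [Finset.mem_coe, Finset.mem_filter, Finset.mem_univ, true_and] at ht
            exact Finset.erase_insert ((hiff _).2 ht.1).2.2.2
      _ = ∑ t ∈ T2, if Separates φ (insert p t) u v then 1 else 0 := by
          rw [hT2]; exact Finset.card_filter _ _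
  have hRab := hR a b c hac hbc (fun t => by tauto)
  have hRbc := hR b c a (Ne.symm hab) (Ne.symm hac) (fun t => by tauto)
  have hRac := hR a c b hab (Ne.symm hbc) (fun t => by tauto)
  -- even part : per-element parity
  have heven : ((univ.filter fun s : Finset E =>
          (s.card = e + 1 ∧ a ∉ s ∧ b ∉ s ∧ Separates φ s a b) ∧ c ∉ s).card
      + (univ.filter fun s : Finset E =>
          (s.card = e + 1 ∧ b ∉ s ∧ c ∉ s ∧ Separates φ s b c) ∧ a ∉ s).card
      + (univ.filter fun s : Finset E =>
          (s.card = e + 1 ∧ a ∉ s ∧ c ∉ s ∧ Separates φ s a c) ∧ b ∉ s).card) % 2 = 0 := by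
    rw [hQab, hQbc, hQac, ← Finset.sum_add_distrib, ← Finset.sum_add_distrib,
      Finset.sum_nat_mod]
    have hper : ∀ s ∈ T, ((if Separates φ s a b then 1 else 0)
        + (if Separates φ s b c then 1 else 0)
        + (if Separates φ s a c then 1 else 0)) % 2 = 0 := by
      intro s hs
      rw [hT, Finset.mem_filter] at hs
      obtain ⟨-, hcard, ha', hb', hc'⟩ := hs
      obtain ⟨x, hx, him⟩ := exists_enum hcard
      have hA0 : φ (Fin.snoc x a) ≠ 0 :=
        hgen _ (injective_snoc hx (not_mem_range_of_image him ha'))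
      have hB0 : φ (Fin.snoc x b) ≠ 0 :=
        hgen _ (injective_snoc hx (not_mem_range_of_image him hb'))
      have hC0 : φ (Fin.snoc x c) ≠ 0 :=
        hgen _ (injective_snoc hx (not_mem_range_of_image him hc'))
      rw [if_congr (separates_iff hanti hx him) rfl rfl,
        if_congr (separates_iff hanti hx him) rfl rfl,
        if_congr (separates_iff hanti hx him) rfl rfl]
      apply even3
      calc (0:ℝ) < (φ (Fin.snoc x a) * φ (Fin.snoc x b) * φ (Fin.snoc x c))
            * (φ (Fin.snoc x a) * φ (Fin.snoc x b) * φ (Fin.snoc x c)) :=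
          mul_self_pos.2 (mul_ne_zero (mul_ne_zero hA0 hB0) hC0)
        _ = φ (Fin.snoc x a) * φ (Fin.snoc x b) * (φ (Fin.snoc x b) * φ (Fin.snoc x c))
            * (φ (Fin.snoc x a) * φ (Fin.snoc x c)) := by ring
    rw [Finset.sum_congr rfl hper]
    simp
  -- odd part : per-element parity
  have hodd : ((univ.filter fun s : Finset E =>
          (s.card = e + 1 ∧ a ∉ s ∧ b ∉ s ∧ Separates φ s a b) ∧ c ∈ s).card
      + (univ.filter fun s : Finset E =>
          (s.card = e + 1 ∧ b ∉ s ∧ c ∉ s ∧ Separates φ s b c) ∧ a ∈ s).card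
      + (univ.filter fun s : Finset E =>
          (s.card = e + 1 ∧ a ∉ s ∧ c ∉ s ∧ Separates φ s a c) ∧ b ∈ s).card) % 2
      = Nat.choose (Fintype.card E - 3) e % 2 := by
    rw [hRab, hRbc, hRac, ← Finset.sum_add_distrib, ← Finset.sum_add_distrib,
      Finset.sum_nat_mod]
    have hper : ∀ t ∈ T2, ((if Separates φ (insert c t) a b then 1 else 0)
        + (if Separates φ (insert a t) b c then 1 else 0)
        + (if Separates φ (insert b t) a c then 1 else 0)) % 2 = 1 := by
      intro t ht
      rw [hT2, Finset.mem_filter] at ht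
      obtain ⟨-, hcard, ha', hb', hc'⟩ := ht
      obtain ⟨y, hy, himy⟩ := exists_enum hcard
      have hx1 : Function.Injective (Fin.snoc y c : Fin (e+1) → E) :=
        injective_snoc hy (not_mem_range_of_image himy hc')
      have hx2 : Function.Injective (Fin.snoc y a : Fin (e+1) → E) :=
        injective_snoc hy (not_mem_range_of_image himy ha')
      have hx3 : Function.Injective (Fin.snoc y b : Fin (e+1) → E) :=
        injective_snoc hy (not_mem_range_of_image himy hb')
      have him1 : Finset.image (Fin.snoc y c : Fin (e+1) → E) Finset.univ = insert c t := by
        rw [image_snoc, himy]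
      have him2 : Finset.image (Fin.snoc y a : Fin (e+1) → E) Finset.univ = insert a t := by
        rw [image_snoc, himy]
      have him3 : Finset.image (Fin.snoc y b : Fin (e+1) → E) Finset.univ = insert b t := by
        rw [image_snoc, himy]
      have hA0 : φ (Fin.snoc (Fin.snoc y c) a) ≠ 0 :=
        hgen _ (injective_snoc hx1 (not_mem_range_of_image him1
          (by simp [Finset.mem_insert, hac, ha'])))
      have hB0 : φ (Fin.snoc (Fin.snoc y c) b) ≠ 0 :=
        hgen _ (injective_snoc hx1 (not_mem_range_of_image him1
          (by simp [Finset.mem_insert, hbc, hb'])))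
      have hC0 : φ (Fin.snoc (Fin.snoc y a) b) ≠ 0 :=
        hgen _ (injective_snoc hx2 (not_mem_range_of_image him2
          (by simp [Finset.mem_insert, Ne.symm hab, hb'])))
      rw [if_congr (separates_iff hanti hx1 him1) rfl rfl,
        if_congr (separates_iff hanti hx2 him2) rfl rfl,
        if_congr (separates_iff hanti hx3 him3) rfl rfl]
      have e1 : φ (Fin.snoc (Fin.snoc y a) c) = - φ (Fin.snoc (Fin.snoc y c) a) :=
        swap_last hanti y a c
      have e2 : φ (Fin.snoc (Fin.snoc y b) a) = - φ (Fin.snoc (Fin.snoc y a) b) :=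
        swap_last hanti y b a
      have e3 : φ (Fin.snoc (Fin.snoc y b) c) = - φ (Fin.snoc (Fin.snoc y c) b) :=
        swap_last hanti y b c
      apply odd3
      rw [e1, e2, e3]
      calc φ (Fin.snoc (Fin.snoc y c) a) * φ (Fin.snoc (Fin.snoc y c) b)
            * (φ (Fin.snoc (Fin.snoc y a) b) * -φ (Fin.snoc (Fin.snoc y c) a))
            * (-φ (Fin.snoc (Fin.snoc y a) b) * -φ (Fin.snoc (Fin.snoc y c) b))
          = -((φ (Fin.snoc (Fin.snoc y c) a) * φ (Fin.snoc (Fin.snoc y c) b)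
              * φ (Fin.snoc (Fin.snoc y a) b))
            * (φ (Fin.snoc (Fin.snoc y c) a) * φ (Fin.snoc (Fin.snoc y c) b)
              * φ (Fin.snoc (Fin.snoc y a) b))) := by ring
        _ < 0 := neg_lt_zero.2 (mul_self_pos.2
            (mul_ne_zero (mul_ne_zero hA0 hB0) hC0))
    rw [Finset.sum_congr rfl hper]
    rw [Finset.sum_const, smul_eq_mul, mul_one]
    have hT2card : T2.card = Nat.choose (Fintype.card E - 3) e := by
      rw [hT2, show (univ.filter fun t : Finset E => t.card = e ∧ a ∉ t ∧ b ∉ t ∧ c ∉ t)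
          = Finset.powersetCard e ((univ : Finset E) \ {a, b, c}) from ?_,
        Finset.card_powersetCard]
      · congr 1
        rw [Finset.card_sdiff_of_subset (Finset.subset_univ _), Finset.card_univ]
        congr 1
        rw [Finset.card_insert_of_notMem (by simp [hab, hac]),
          Finset.card_insert_of_notMem (by simp [hbc]), Finset.card_singleton]
      · ext t
        simp only [Finset.mem_filter, Finset.mem_univ, true_and, Finset.mem_powersetCard,
          Finset.subset_iff, Finset.mem_sdiff, Finset.mem_insert, Finset.mem_singleton]
        constructor
        · rintro ⟨hcard, ha', hb', hc'⟩
          refine ⟨fun z hz => ?_, hcard⟩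
          rintro (rfl | rfl | rfl)
          · exact ha' hz
          · exact hb' hz
          · exact hc' hz
        · rintro ⟨hsub, hcard⟩
          refine ⟨hcard, fun h => (hsub h) (Or.inl rfl),
            fun h => (hsub h) (Or.inr (Or.inl rfl)),
            fun h => (hsub h) (Or.inr (Or.inr rfl))⟩
    rw [hT2card]
  omega

theorem stmt_5 {E : Type*} [Fintype E] [DecidableEq E] (d : ℕ) (hd : 1 ≤ d)
    (hcard : d + 1 ≤ Fintype.card E)
    (φ : (Fin (d + 1) → E) → ℝ)
    (hgen : IsGenericFn φ) (hanti : IsAntisymmetricFn φ)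
    (a b c : E) (h1 : ¬ OrchardAnti φ a b) (h2 : ¬ OrchardAnti φ b c) :
    OrchardAnti φ a c := by
  
  classical
  by_cases hac : a = c
  · exact Or.inl hac
  have hab : a ≠ b := fun h => h1 (Or.inl h)
  have hbc : b ≠ c := fun h => h2 (Or.inl h)
  obtain ⟨e, rfl⟩ : ∃ e, d = e + 1 := ⟨d - 1, by omega⟩
  have key := key_parity e φ hgen hanti a b c hab hbc hac
  simp only [OrchardAnti, Nat.add_sub_cancel] at h1 h2 ⊢
  push_neg at h1 h2
  exact Or.inr (by omega)
end

section
/- Let E be a finite set, d ≥ 1, and let φ be a generic symmetric function on the injective (d+1)-tuples of E. For x ∈ E let μ(x) be the number of d-subsets {x₁,…,x_d} ⊆ E∖{x} with φ(x,x₁,…,x_d) > 0. Then two elements x, y ∈ E are Orchard equivalent with respect to φ if and only if μ(x) ≡ μ(y) (mod 2). -/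
open Finset

set_option linter.unusedSectionVars false

section helpers
variable {E : Type*} [DecidableEq E] {d : ℕ}

/-- extend a perm of Fin d to Fin (d+1) fixing 0 -/
noncomputable def permExt (σ : Equiv.Perm (Fin d)) : Equiv.Perm (Fin (d + 1)) :=
  ((finSuccEquiv d).symm.permCongr σ.optionCongr)

lemma permExt_zero (σ : Equiv.Perm (Fin d)) : permExt σ 0 = 0 := by
  simp [permExt, Equiv.permCongr_apply]

lemma permExt_succ (σ : Equiv.Perm (Fin d)) (i : Fin d) :
    permExt σ i.succ = (σ i).succ := by
  simp [permExt, Equiv.permCongr_apply]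

lemma cons_comp_permExt (a : E) (t : Fin d → E) (σ : Equiv.Perm (Fin d)) :
    Fin.cons a t ∘ permExt σ = Fin.cons a (t ∘ σ) := by
  funext i
  refine Fin.cases ?_ (fun j => ?_) i
  · simp [permExt_zero]
  · simp [permExt_succ]

/-- value of symmetric φ at cons only depends on the image of the tail -/
lemma sym_cons_eq (φ : (Fin (d + 1) → E) → ℝ) (hsym : IsSymmetricFn φ)
    (a : E) (t t' : Fin d → E) (ht : Function.Injective t)
    (ht' : Function.Injective t')
    (h : Finset.image t Finset.univ = Finset.image t' Finset.univ) :
    φ (Fin.cons a t) = φ (Fin.cons a t') := by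
  have hrange : Set.range t = Set.range t' := by
    have := congrArg (fun s : Finset E => (s : Set E)) h
    simpa [Finset.coe_image, Set.image_univ] using this
  have hmem : ∀ i, t' i ∈ Set.range t := fun i => hrange ▸ Set.mem_range_self i
  set f : Fin d → Fin d := fun i => (Equiv.ofInjective t ht).symm ⟨t' i, hmem i⟩ with hf
  have hft : ∀ i, t (f i) = t' i := fun i => Equiv.apply_ofInjective_symm ht _
  have hfinj : Function.Injective f := by
    intro i j hij
    apply ht'
    rw [← hft i, ← hft j, hij]
  have hbij := Finite.injective_iff_bijective.mp hfinj
  set σ := Equiv.ofBijective f hbij with hσ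
  have htσ : t ∘ σ = t' := by funext i; exact hft i
  have : φ (Fin.cons a t') = φ (Fin.cons a t) := by
    rw [← htσ, ← cons_comp_permExt]; exact hsym _ _
  exact this.symm

lemma snoc_eq_cons_comp (a : E) (t : Fin d → E) :
    Fin.snoc t a = Fin.cons a t ∘ finRotate (d + 1) := by
  funext i
  refine Fin.lastCases ?_ (fun j => ?_) i
  · simp [finRotate_succ_apply]
  · simp [finRotate_succ_apply, Fin.coeSucc_eq_succ]

lemma sym_snoc_eq_cons (φ : (Fin (d + 1) → E) → ℝ) (hsym : IsSymmetricFn φ)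
    (a : E) (t : Fin d → E) : φ (Fin.snoc t a) = φ (Fin.cons a t) := by
  rw [snoc_eq_cons_comp]
  exact hsym _ _

end helpers
section helpers2
variable {E : Type*} [DecidableEq E] {d : ℕ}

def PosOn (φ : (Fin (d + 1) → E) → ℝ) (a : E) (s : Finset E) : Prop :=
  ∃ t : Fin d → E, Function.Injective t ∧ Finset.image t Finset.univ = s ∧
    0 < φ (Fin.cons a t)

lemma range_eq_of_image {t : Fin d → E} {s : Finset E}
    (h : Finset.image t Finset.univ = s) : Set.range t = ↑s := by
  rw [← h]; simp [Finset.coe_image, Set.image_univ]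

lemma enum_exists {s : Finset E} (h : s.card = d) :
    ∃ t : Fin d → E, Function.Injective t ∧ Finset.image t Finset.univ = s := by
  have e := s.equivFinOfCardEq h
  refine ⟨fun i => (e.symm i : E), ?_, ?_⟩
  · exact Subtype.coe_injective.comp e.symm.injective
  · ext a
    simp only [Finset.mem_image, Finset.mem_univ, true_and]
    constructor
    · rintro ⟨i, rfl⟩; exact (e.symm i).2
    · intro ha; exact ⟨e ⟨a, ha⟩, by simp⟩

lemma cons_inj {a : E} {t : Fin d → E} {s : Finset E}
    (ht : Function.Injective t) (himg : Finset.image t Finset.univ = s)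
    (ha : a ∉ s) : Function.Injective (Fin.cons a t : Fin (d+1) → E) := by
  rw [Fin.cons_injective_iff]
  exact ⟨by rw [range_eq_of_image himg]; exact fun h => ha h, ht⟩

lemma pos_iff {φ : (Fin (d + 1) → E) → ℝ} (hsym : IsSymmetricFn φ)
    {a : E} {t : Fin d → E} {s : Finset E}
    (ht : Function.Injective t) (himg : Finset.image t Finset.univ = s) :
    PosOn φ a s ↔ 0 < φ (Fin.cons a t) := by
  constructor
  · rintro ⟨t', ht', himg', hpos⟩
    rwa [sym_cons_eq φ hsym a t t' ht ht' (by rw [himg, himg'])]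
  · intro h; exact ⟨t, ht, himg, h⟩

lemma not_pos_iff {φ : (Fin (d + 1) → E) → ℝ} (hgen : IsGenericFn φ)
    (hsym : IsSymmetricFn φ) {a : E} {t : Fin d → E} {s : Finset E}
    (ht : Function.Injective t) (himg : Finset.image t Finset.univ = s)
    (ha : a ∉ s) : ¬ PosOn φ a s ↔ φ (Fin.cons a t) < 0 := by
  rw [pos_iff hsym ht himg]
  have hne : φ (Fin.cons a t) ≠ 0 := hgen _ (cons_inj ht himg ha)
  exact ⟨fun h => hne.lt_or_gt.resolve_right h, fun h => h.asymm⟩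

lemma sep_iff {φ : (Fin (d + 1) → E) → ℝ} (hsym : IsSymmetricFn φ)
    {a b : E} {t : Fin d → E} {s : Finset E}
    (ht : Function.Injective t) (himg : Finset.image t Finset.univ = s) :
    Separates φ s a b ↔ φ (Fin.cons a t) * φ (Fin.cons b t) < 0 := by
  constructor
  · rintro ⟨t', ht', himg', hprod⟩
    rw [sym_snoc_eq_cons φ hsym a t', sym_snoc_eq_cons φ hsym b t'] at hprod
    rwa [sym_cons_eq φ hsym a t t' ht ht' (by rw [himg, himg']),
      sym_cons_eq φ hsym b t t' ht ht' (by rw [himg, himg'])]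
  · intro h
    exact ⟨t, ht, himg, by
      rwa [sym_snoc_eq_cons φ hsym a t, sym_snoc_eq_cons φ hsym b t]⟩

lemma sep_xor {φ : (Fin (d + 1) → E) → ℝ} (hgen : IsGenericFn φ)
    (hsym : IsSymmetricFn φ) {a b : E} {s : Finset E}
    (hs : s.card = d) (ha : a ∉ s) (hb : b ∉ s) :
    Separates φ s a b ↔ ¬ (PosOn φ a s ↔ PosOn φ b s) := by
  obtain ⟨t, ht, himg⟩ := enum_exists hs
  rw [sep_iff hsym ht himg, pos_iff (a := a) hsym ht himg,
    pos_iff (a := b) hsym ht himg]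
  have hA : φ (Fin.cons a t) ≠ 0 := hgen _ (cons_inj ht himg ha)
  have hB : φ (Fin.cons b t) ≠ 0 := hgen _ (cons_inj ht himg hb)
  have hAiff : (0 < φ (Fin.cons a t)) ↔ ¬ (φ (Fin.cons a t) < 0) :=
    ⟨fun h => h.asymm, fun h => hA.lt_or_gt.resolve_left h⟩
  have hBiff : (0 < φ (Fin.cons b t)) ↔ ¬ (φ (Fin.cons b t) < 0) :=
    ⟨fun h => h.asymm, fun h => hB.lt_or_gt.resolve_left h⟩
  rw [mul_neg_iff, hAiff, hBiff]
  tauto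

lemma image_cons (a : E) (u : Fin d → E) :
    Finset.image (Fin.cons a u : Fin (d+1) → E) Finset.univ =
      insert a (Finset.image u Finset.univ) := by
  ext b
  simp only [Finset.mem_image, Finset.mem_univ, true_and, Finset.mem_insert,
    Fin.exists_fin_succ, Fin.cons_zero, Fin.cons_succ]
  tauto

lemma parity_filter {α : Type*} (F : Finset α) (P Q : α → Prop)
    [DecidablePred P] [DecidablePred Q] :
    (F.filter P).card + (F.filter Q).card =
      (F.filter fun s => ¬(P s ↔ Q s)).card +
        2 * (F.filter fun s => P s ∧ Q s).card := by
  classical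
  have hP : (F.filter P).card = (F.filter fun s => P s ∧ Q s).card
      + (F.filter fun s => P s ∧ ¬ Q s).card := by
    rw [← Finset.filter_filter, ← Finset.filter_filter]
    exact (Finset.card_filter_add_card_filter_not (s := F.filter P) Q).symm
  have hQ : (F.filter Q).card = (F.filter fun s => Q s ∧ P s).card
      + (F.filter fun s => Q s ∧ ¬ P s).card := by
    rw [← Finset.filter_filter, ← Finset.filter_filter]
    exact (Finset.card_filter_add_card_filter_not (s := F.filter Q) P).symm
  have hQP : (F.filter fun s => Q s ∧ P s) = (F.filter fun s => P s ∧ Q s) :=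
    Finset.filter_congr (fun s _ => by tauto)
  have hXor : (F.filter fun s => ¬(P s ↔ Q s)) =
      (F.filter fun s => P s ∧ ¬ Q s) ∪ (F.filter fun s => Q s ∧ ¬ P s) := by
    rw [← Finset.filter_or]
    exact Finset.filter_congr (fun s _ => by tauto)
  have hdisj : Disjoint (F.filter fun s => P s ∧ ¬ Q s)
      (F.filter fun s => Q s ∧ ¬ P s) := by
    rw [Finset.disjoint_left]
    intro a ha hb
    simp only [Finset.mem_filter] at ha hb
    tauto
  rw [hP, hQ, hQP, hXor, Finset.card_union_of_disjoint hdisj]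
  ring

end helpers2
section helpers3
variable {E : Type*} [DecidableEq E] {e : ℕ}

lemma swap_sign (φ : (Fin (e + 2) → E) → ℝ) (hsym : IsSymmetricFn φ)
    (x y : E) (u : Fin e → E) :
    φ (Fin.cons x (Fin.cons y u)) = φ (Fin.cons y (Fin.cons x u)) := by
  have h : (Fin.cons x (Fin.cons y u) : Fin (e + 2) → E) =
      (Fin.cons y (Fin.cons x u) : Fin (e + 2) → E) ∘ (Equiv.swap 0 1) := by
    funext i
    refine Fin.cases ?_ (fun j => ?_) i
    · simp only [Function.comp_apply, Fin.cons_zero, Equiv.swap_apply_left]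
      rw [← Fin.succ_zero_eq_one, Fin.cons_succ, Fin.cons_zero]
    · refine Fin.cases ?_ (fun k => ?_) j
      · simp only [Function.comp_apply, Fin.cons_succ, Fin.cons_zero]
        rw [Fin.succ_zero_eq_one, Equiv.swap_apply_right, Fin.cons_zero]
      · have h0 : (Fin.succ (Fin.succ k) : Fin (e + 2)) ≠ 0 := Fin.succ_ne_zero _
        have h1 : (Fin.succ (Fin.succ k) : Fin (e + 2)) ≠ 1 := by
          rw [← Fin.succ_zero_eq_one]
          exact fun h => Fin.succ_ne_zero _ (Fin.succ_injective _ h)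
        simp [Equiv.swap_apply_of_ne_of_ne h0 h1]
  rw [h, hsym]

lemma pos_insert (φ : (Fin (e + 2) → E) → ℝ) (hgen : IsGenericFn φ)
    (hsym : IsSymmetricFn φ) {x y : E} {s : Finset E}
    (hs : s.card = e + 1) (hx : x ∉ s) (hy : y ∈ s) :
    PosOn φ x s ↔ PosOn φ y (insert x (Finset.erase s y)) := by
  have hcard : (s.erase y).card = e := by
    rw [Finset.card_erase_of_mem hy, hs]
    omega
  obtain ⟨u, hu, himgu⟩ := enum_exists hcard
  have hyu : y ∉ s.erase y := Finset.notMem_erase y s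
  have hxu : x ∉ s.erase y := fun h => hx (Finset.mem_of_mem_erase h)
  have ht_inj : Function.Injective (Fin.cons y u : Fin (e + 1) → E) :=
    cons_inj hu himgu hyu
  have ht_img : Finset.image (Fin.cons y u : Fin (e + 1) → E) Finset.univ = s := by
    rw [image_cons, himgu, Finset.insert_erase hy]
  have ht'_inj : Function.Injective (Fin.cons x u : Fin (e + 1) → E) :=
    cons_inj hu himgu hxu
  have ht'_img : Finset.image (Fin.cons x u : Fin (e + 1) → E) Finset.univ =
      insert x (Finset.erase s y) := by rw [image_cons, himgu]
  rw [pos_iff hsym ht_inj ht_img, pos_iff hsym ht'_inj ht'_img,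
    swap_sign φ hsym x y u]

lemma BX_card_eq [Fintype E] (φ : (Fin (e + 2) → E) → ℝ) (hgen : IsGenericFn φ)
    (hsym : IsSymmetricFn φ) (x y : E) (hxy : x ≠ y)
    [∀ s : Finset E, Decidable (PosOn φ x s)]
    [∀ s : Finset E, Decidable (PosOn φ y s)] :
    (Finset.univ.filter (fun s : Finset E =>
        s.card = e + 1 ∧ x ∉ s ∧ y ∈ s ∧ PosOn φ x s)).card =
      (Finset.univ.filter (fun s : Finset E =>
        s.card = e + 1 ∧ y ∉ s ∧ x ∈ s ∧ PosOn φ y s)).card := by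
  refine Finset.card_bij' (fun s _ => insert x (Finset.erase s y))
    (fun s _ => insert y (Finset.erase s x)) ?_ ?_ ?_ ?_
  · intro s hs
    simp only [Finset.mem_filter, Finset.mem_univ, true_and] at hs ⊢
    obtain ⟨hc, hxs, hys, hpos⟩ := hs
    have hxe : x ∉ s.erase y := fun h => hxs (Finset.mem_of_mem_erase h)
    refine ⟨?_, ?_, ?_, ?_⟩
    · rw [Finset.card_insert_of_notMem hxe, Finset.card_erase_of_mem hys]
      omega
    · simp only [Finset.mem_insert]
      rintro (h | h)
      · exact hxy h.symm
      · exact Finset.notMem_erase y s h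
    · exact Finset.mem_insert_self x _
    · exact (pos_insert φ hgen hsym hc hxs hys).mp hpos
  · intro s hs
    simp only [Finset.mem_filter, Finset.mem_univ, true_and] at hs ⊢
    obtain ⟨hc, hys, hxs, hpos⟩ := hs
    have hye : y ∉ s.erase x := fun h => hys (Finset.mem_of_mem_erase h)
    refine ⟨?_, ?_, ?_, ?_⟩
    · rw [Finset.card_insert_of_notMem hye, Finset.card_erase_of_mem hxs]
      omega
    · simp only [Finset.mem_insert]
      rintro (h | h)
      · exact hxy h
      · exact Finset.notMem_erase x s h
    · exact Finset.mem_insert_self y _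
    · exact (pos_insert φ hgen hsym hc hys hxs).mp hpos
  · intro s hs
    simp only [Finset.mem_filter, Finset.mem_univ, true_and] at hs
    obtain ⟨hc, hxs, hys, hpos⟩ := hs
    have hxe : x ∉ s.erase y := fun h => hxs (Finset.mem_of_mem_erase h)
    show insert y (Finset.erase (insert x (Finset.erase s y)) x) = s
    rw [Finset.erase_insert hxe, Finset.insert_erase hys]
  · intro s hs
    simp only [Finset.mem_filter, Finset.mem_univ, true_and] at hs
    obtain ⟨hc, hys, hxs, hpos⟩ := hs
    have hye : y ∉ s.erase x := fun h => hys (Finset.mem_of_mem_erase h)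
    show insert x (Finset.erase (insert y (Finset.erase s x)) y) = s
    rw [Finset.erase_insert hye, Finset.insert_erase hxs]

end helpers3
theorem stmt_8 {E : Type*} [Fintype E] [DecidableEq E] (d : ℕ) (hd : 1 ≤ d)
    (hcard : d + 1 ≤ Fintype.card E)
    (φ : (Fin (d + 1) → E) → ℝ)
    (hgen : IsGenericFn φ) (hsym : IsSymmetricFn φ) :
    ∀ x y : E, OrchardSym φ x y ↔ muCount φ x % 2 = muCount φ y % 2 := by
  classical
  obtain ⟨e, rfl⟩ : ∃ e, d = e + 1 := ⟨d - 1, by omega⟩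
  intro x y
  by_cases hxy : x = y
  · subst hxy
    simp [OrchardSym]
  · have hμ : ∀ z : E, muCount φ z =
        (Finset.univ.filter (fun s : Finset E =>
          s.card = e + 1 ∧ z ∉ s ∧ PosOn φ z s)).card := by
      intro z
      unfold muCount
      have hset : {s : Finset E | s.card = e + 1 ∧ z ∉ s ∧
          ∃ t : Fin (e + 1) → E, Function.Injective t ∧
            Finset.image t Finset.univ = s ∧ 0 < φ (Fin.cons z t)} =
          ↑(Finset.univ.filter (fun s : Finset E =>
            s.card = e + 1 ∧ z ∉ s ∧ PosOn φ z s)) := by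
        ext s; simp only [Set.mem_setOf_eq, Finset.coe_filter, Finset.mem_univ, true_and]; exact Iff.rfl
      rw [hset, Set.ncard_coe_finset]
    have hsep : sepCount φ x y = (Finset.univ.filter (fun s : Finset E =>
        s.card = e + 1 ∧ x ∉ s ∧ y ∉ s ∧ Separates φ s x y)).card := by
      unfold sepCount
      have hset : {s : Finset E | s.card = e + 1 ∧ x ∉ s ∧ y ∉ s ∧
          Separates φ s x y} =
          ↑(Finset.univ.filter (fun s : Finset E =>
            s.card = e + 1 ∧ x ∉ s ∧ y ∉ s ∧ Separates φ s x y)) := by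
        ext s; simp
      rw [hset, Set.ncard_coe_finset]
    set F := Finset.univ.filter
      (fun s : Finset E => s.card = e + 1 ∧ x ∉ s ∧ y ∉ s) with hF
    have hsepF : Finset.univ.filter (fun s : Finset E =>
        s.card = e + 1 ∧ x ∉ s ∧ y ∉ s ∧ Separates φ s x y) =
        F.filter (fun s => ¬(PosOn φ x s ↔ PosOn φ y s)) := by
      rw [hF, Finset.filter_filter]
      refine Finset.filter_congr (fun s _ => ?_)
      constructor
      · rintro ⟨h1, h2, h3, h4⟩
        exact ⟨⟨h1, h2, h3⟩, (sep_xor hgen hsym h1 h2 h3).mp h4⟩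
      · rintro ⟨⟨h1, h2, h3⟩, h4⟩
        exact ⟨h1, h2, h3, (sep_xor hgen hsym h1 h2 h3).mpr h4⟩
    have hAXeq : F.filter (fun s => PosOn φ x s) =
        Finset.univ.filter (fun s : Finset E =>
          s.card = e + 1 ∧ x ∉ s ∧ y ∉ s ∧ PosOn φ x s) := by
      rw [hF, Finset.filter_filter]
      exact Finset.filter_congr (fun s _ => by tauto)
    have hAYeq : F.filter (fun s => PosOn φ y s) =
        Finset.univ.filter (fun s : Finset E =>
          s.card = e + 1 ∧ x ∉ s ∧ y ∉ s ∧ PosOn φ y s) := by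
      rw [hF, Finset.filter_filter]
      exact Finset.filter_congr (fun s _ => by tauto)
    have hsplitx : muCount φ x =
        (Finset.univ.filter (fun s : Finset E =>
          s.card = e + 1 ∧ x ∉ s ∧ y ∉ s ∧ PosOn φ x s)).card +
        (Finset.univ.filter (fun s : Finset E =>
          s.card = e + 1 ∧ x ∉ s ∧ y ∈ s ∧ PosOn φ x s)).card := by
      rw [hμ x]
      have h := Finset.card_filter_add_card_filter_not
        (s := Finset.univ.filter (fun s : Finset E =>
          s.card = e + 1 ∧ x ∉ s ∧ PosOn φ x s))
        (p := fun s : Finset E => y ∉ s)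
      rw [Finset.filter_filter, Finset.filter_filter] at h
      rw [← h]
      congr 1
      · congr 1
        exact Finset.filter_congr (fun s _ => by tauto)
      · congr 1
        exact Finset.filter_congr (fun s _ => by tauto)
    have hsplity : muCount φ y =
        (Finset.univ.filter (fun s : Finset E =>
          s.card = e + 1 ∧ x ∉ s ∧ y ∉ s ∧ PosOn φ y s)).card +
        (Finset.univ.filter (fun s : Finset E =>
          s.card = e + 1 ∧ y ∉ s ∧ x ∈ s ∧ PosOn φ y s)).card := by
      rw [hμ y]
      have h := Finset.card_filter_add_card_filter_not
        (s := Finset.univ.filter (fun s : Finset E =>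
          s.card = e + 1 ∧ y ∉ s ∧ PosOn φ y s))
        (p := fun s : Finset E => x ∉ s)
      rw [Finset.filter_filter, Finset.filter_filter] at h
      rw [← h]
      congr 1
      · congr 1
        exact Finset.filter_congr (fun s _ => by tauto)
      · congr 1
        exact Finset.filter_congr (fun s _ => by tauto)
    have hBeq := BX_card_eq φ hgen hsym x y hxy
    have hparity := parity_filter F
      (fun s => PosOn φ x s) (fun s => PosOn φ y s)
    have hO : OrchardSym φ x y ↔ sepCount φ x y % 2 = 0 := by
      unfold OrchardSym
      exact or_iff_right hxy
    have h1 : sepCount φ x y =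
        (F.filter (fun s => ¬(PosOn φ x s ↔ PosOn φ y s))).card := by
      rw [hsep, hsepF]
    have h2 : muCount φ x = (F.filter (fun s => PosOn φ x s)).card +
        (Finset.univ.filter (fun s : Finset E =>
          s.card = e + 1 ∧ x ∉ s ∧ y ∈ s ∧ PosOn φ x s)).card := by
      rw [hsplitx, hAXeq]
    have h3 : muCount φ y = (F.filter (fun s => PosOn φ y s)).card +
        (Finset.univ.filter (fun s : Finset E =>
          s.card = e + 1 ∧ y ∉ s ∧ x ∈ s ∧ PosOn φ y s)).card := by
      rw [hsplity, hAYeq]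
    rw [hO]
    omega
end
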